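/- For x, y ∈ [0, π/2] and z ≥ 0, the real part of G(xi, yi, z) equals (1/2)·log((cosh(z) + cos(x−y))/(cosh(z) + cos(x+y))), which equals −S(xi, yi, z). -/

import Mathlib

open Real Complex

lemma normSq_key (a b z : ℝ) :
    Complex.normSq (Complex.exp ((a:ℂ)*Complex.I) + Complex.exp ((b:ℂ)*Complex.I + z)) =
      2 * Real.exp z * (Real.cosh z + Real.cos (a - b)) := by
  have h1 : Complex.exp ((b:ℂ)*Complex.I + z)
      = Complex.exp ((b:ℂ)*Complex.I) * (Real.exp z : ℂ) := by
    rw [Complex.ofReal_exp, ← Complex.exp_add]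
  have h2 : Real.exp z * Real.exp (-z) = 1 := by rw [← Real.exp_add]; simp
  rw [h1]
  simp only [Complex.normSq_apply, Complex.add_re, Complex.add_im, Complex.mul_re,
    Complex.mul_im, Complex.exp_ofReal_mul_I_re, Complex.exp_ofReal_mul_I_im,
    Complex.ofReal_re, Complex.ofReal_im, Real.cos_sub, Real.cosh_eq]
  nlinarith [Real.sin_sq_add_cos_sq a, Real.sin_sq_add_cos_sq b, sq_nonneg (Real.exp z)]

/-- The gap function `G` (logarithmic form, principal branch complex logarithm). -/
noncomputable def G (x y z : ℂ) : ℂ :=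
  Complex.log ((Complex.exp x + Complex.exp (y + z)) /
    (Complex.exp (-x) + Complex.exp (y + z)))

/-- The projection function `S` (logarithmic form). -/
noncomputable def S (x y z : ℂ) : ℂ :=
  (1/2) * Complex.log ((Complex.cosh z + Complex.cosh (x + y)) /
    (Complex.cosh z + Complex.cosh (x - y)))

theorem re_G_of_two_imaginary (x y z : ℝ) (hz : 0 ≤ z)
    (hx : x ∈ Set.Icc 0 (π/2)) (hy : y ∈ Set.Icc 0 (π/2)) :
    (G ((x : ℂ) * Complex.I) ((y : ℂ) * Complex.I) (z : ℂ)).re =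
        (1/2) * Real.log ((Real.cosh z + Real.cos (x - y)) /
          (Real.cosh z + Real.cos (x + y))) ∧
      (((G ((x : ℂ) * Complex.I) ((y : ℂ) * Complex.I) (z : ℂ)).re : ℝ) : ℂ) =
        - S ((x : ℂ) * Complex.I) ((y : ℂ) * Complex.I) (z : ℂ) := by
  obtain ⟨hx0, hx1⟩ := hx
  obtain ⟨hy0, hy1⟩ := hy
  set A := Real.cosh z + Real.cos (x - y) with hA
  set B := Real.cosh z + Real.cos (x + y) with hB
  have hcosh1 : 1 ≤ Real.cosh z := Real.one_le_cosh z
  have hApos : 0 < A := by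
    have hc : 0 ≤ Real.cos (x - y) :=
      Real.cos_nonneg_of_mem_Icc ⟨by linarith, by linarith⟩
    have := hcosh1; linarith
  have hBnn : 0 ≤ B := by
    have := Real.neg_one_le_cos (x + y); linarith
  set num := Complex.exp ((x:ℂ)*Complex.I) + Complex.exp ((y:ℂ)*Complex.I + z) with hnumdef
  set den := Complex.exp (-((x:ℂ)*Complex.I)) + Complex.exp ((y:ℂ)*Complex.I + z) with hdendef
  have hnum : Complex.normSq num = 2 * Real.exp z * A := normSq_key x y z
  have hden : Complex.normSq den = 2 * Real.exp z * B := by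
    have h : Complex.exp (-((x:ℂ)*Complex.I)) = Complex.exp (((-x : ℝ):ℂ)*Complex.I) := by
      push_cast; ring_nf
    rw [hdendef, h, normSq_key (-x) y z]
    have : Real.cos (-x - y) = Real.cos (x + y) := by
      rw [show -x - y = -(x+y) by ring, Real.cos_neg]
    rw [this]
  -- first part
  have hre : (G ((x : ℂ) * Complex.I) ((y : ℂ) * Complex.I) (z : ℂ)).re =
      Real.log ‖num / den‖ := by
    rw [G, Complex.log_re]
  have part1 : (G ((x : ℂ) * Complex.I) ((y : ℂ) * Complex.I) (z : ℂ)).re =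
      (1/2) * Real.log (A / B) := by
    rcases eq_or_lt_of_le hBnn with hB0 | hBpos
    · have hden0 : den = 0 := by
        rw [← Complex.normSq_eq_zero, hden, ← hB0]; ring
      rw [hre, hden0, div_zero, norm_zero, Real.log_zero, ← hB0, div_zero, Real.log_zero]
      ring
    · have hdne : den ≠ 0 := by
        intro h
        rw [h, Complex.normSq_zero] at hden
        nlinarith [Real.exp_pos z]
      have hnne : num ≠ 0 := by
        intro h
        rw [h, Complex.normSq_zero] at hnum
        nlinarith [Real.exp_pos z]
      rw [hre, norm_div]
      have habs : ∀ w : ℂ, ‖w‖ = Real.sqrt (Complex.normSq w) :=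
        fun w => Complex.norm_def w
      rw [habs, habs, hnum, hden, ← Real.sqrt_div' _ (by positivity)]
      · rw [Real.log_sqrt (by positivity)]
        have : 2 * Real.exp z * A / (2 * Real.exp z * B) = A / B := by
          rw [mul_div_mul_left]
          positivity
        rw [this]; ring
  refine ⟨part1, ?_⟩
  -- second part
  have hS : S ((x : ℂ) * Complex.I) ((y : ℂ) * Complex.I) (z : ℂ)
      = (1/2) * ((Real.log (B / A) : ℝ) : ℂ) := by
    rw [S]
    have e1 : (x:ℂ)*Complex.I + (y:ℂ)*Complex.I = ((x + y : ℝ):ℂ) * Complex.I := by push_cast; ring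
    have e2 : (x:ℂ)*Complex.I - (y:ℂ)*Complex.I = ((x - y : ℝ):ℂ) * Complex.I := by push_cast; ring
    rw [e1, e2, Complex.cosh_mul_I, Complex.cosh_mul_I, ← Complex.ofReal_cos,
      ← Complex.ofReal_cos, ← Complex.ofReal_cosh]
    rw [show ((Real.cosh z : ℂ) + (Real.cos (x+y) : ℂ)) / ((Real.cosh z : ℂ) + (Real.cos (x-y) : ℂ))
        = (((B / A : ℝ)) : ℂ) by push_cast [hA, hB]; ring]
    rw [Complex.ofReal_log (by positivity)]
  rw [part1, hS]
  have : Real.log (A / B) = - Real.log (B / A) := by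
    rw [← Real.log_inv, inv_div]
  rw [this]
  push_cast
  ring
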